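/- In the complicated building C = C(G_1^{v_1}, ..., G_k^{v_k}), for each j, f(C - v_j) = −m_j · ∏_{i≠j} n_i, and f(C - w_j) = n_j · ∏_{i≠j} (n_i − m_i) − ∏_{i=1}^k n_i. -/

import Mathlib

open Finset

/- `f(G) = Σ_C (-1)^{|C|}` over all independent vertex sets `C` of `G`. -/
open Classical in
noncomputable def fgraph {V : Type*} [Fintype V] (G : SimpleGraph V) : ℤ :=
  ∑ s ∈ Finset.univ.filter (fun s : Finset V => ∀ u ∈ s, ∀ v ∈ s, ¬ G.Adj u v),
    (-1 : ℤ) ^ s.card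

/- `f` of the induced subgraph of `G` on the vertex set `A`. -/
open Classical in
noncomputable def fdel {V : Type*} [Fintype V] (G : SimpleGraph V) (A : Set V) : ℤ :=
  fgraph (G.induce A)

/-- Adjacency within the disjoint union of a family of graphs. -/
def sigmaAdj {ι : Type*} {V : ι → Type*} (G : ∀ i, SimpleGraph (V i)) :
    (Σ i, V i) → (Σ i, V i) → Prop
  | ⟨i, a⟩, ⟨j, b⟩ => ∃ h : j = i, (G i).Adj a (h ▸ b)

/-- The simple building `S(G₁^{v₁}, …, G_k^{v_k})`: the disjoint union of the `G i`
together with a central vertex (`none`) joined to each `v i` by an edge. -/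
def simpleBuilding {ι : Type*} {V : ι → Type*} (G : ∀ i, SimpleGraph (V i))
    (v : ∀ i, V i) : SimpleGraph (Option (Σ i, V i)) :=
  SimpleGraph.fromRel (fun x y => match x, y with
    | some a, some b => sigmaAdj G a b
    | some a, none => a.2 = v a.1
    | none, _ => False)

/-- The complicated building `C(G₁^{v₁}, …, G_k^{v_k})`: the disjoint union of the `G i`
together with a central vertex `w = none` and intermediate vertices `w_i = some (inr i)`,
with edges `w – w_i` and `w_i – v_i`. -/
def complBuilding {ι : Type*} {V : ι → Type*} (G : ∀ i, SimpleGraph (V i))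
    (v : ∀ i, V i) : SimpleGraph (Option ((Σ i, V i) ⊕ ι)) :=
  SimpleGraph.fromRel (fun x y => match x, y with
    | some (.inl a), some (.inl b) => sigmaAdj G a b
    | some (.inl a), some (.inr i) => a.1 = i ∧ a.2 = v a.1
    | some (.inr _), none => True
    | _, _ => False)

open Classical in
lemma fgraph_congr {V W : Type*} [Fintype V] [Fintype W] (e : V ≃ W)
    (G : SimpleGraph V) (H : SimpleGraph W)
    (h : ∀ a b, G.Adj a b ↔ H.Adj (e a) (e b)) : fgraph G = fgraph H := by
  unfold fgraph
  refine Finset.sum_nbij' (fun s => s.map e.toEmbedding) (fun s => s.map e.symm.toEmbedding)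
    ?_ ?_ ?_ ?_ ?_
  · intro s hs
    simp only [mem_filter, mem_univ, true_and, Finset.mem_map, Equiv.coe_toEmbedding] at hs ⊢
    rintro u ⟨a, ha, rfl⟩ w ⟨b, hb, rfl⟩
    exact fun hadj => hs a ha b hb ((h a b).2 hadj)
  · intro s hs
    simp only [mem_filter, mem_univ, true_and, Finset.mem_map, Equiv.coe_toEmbedding] at hs ⊢
    rintro u ⟨a, ha, rfl⟩ w ⟨b, hb, rfl⟩
    intro hadj
    exact hs a ha b hb (by simpa using (h _ _).1 hadj)
  · intro s hs
    simp [Finset.map_map]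
  · intro s hs
    simp [Finset.map_map]
  · intro s hs
    simp

lemma sum_pow_filter_congr {α : Type*} (p q : α → Prop) (hpq : ∀ a, p a ↔ q a)
    [h1 : DecidablePred p] [h2 : DecidablePred q] (s : Finset α) (f : α → ℤ) :
    ∑ x ∈ s.filter p, f x = ∑ x ∈ s.filter q, f x := by
  apply Finset.sum_congr _ (fun _ _ => rfl)
  ext a
  simp only [Finset.mem_filter]
  exact and_congr_right fun _ => hpq a

lemma sum_pow_filter_congr' {α : Type*} (p q : α → Prop) (h1 : DecidablePred p)
    (h2 : DecidablePred q) (hpq : ∀ a, p a ↔ q a) (s : Finset α) (f : α → ℤ) :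
    ∑ x ∈ @Finset.filter _ p h1 s, f x = ∑ x ∈ @Finset.filter _ q h2 s, f x := by
  apply Finset.sum_congr _ (fun _ _ => rfl)
  ext a
  rw [Finset.mem_filter, Finset.mem_filter]
  exact and_congr_right fun _ => hpq a

lemma fgraph_inst {V : Type*} (h1 h2 : Fintype V) (G : SimpleGraph V) :
    @fgraph V h1 G = @fgraph V h2 G :=
  @fgraph_congr V V h1 h2 (Equiv.refl V) G G (fun _ _ => Iff.rfl)

set_option linter.unreachableTactic false
set_option linter.unnecessarySeqFocus false
set_option linter.unusedTactic false
set_option maxHeartbeats 2000000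

def deco {W : Type*} (K : SimpleGraph W) (P : W → Prop) : SimpleGraph (Option W) where
  Adj x y := match x, y with
    | some a, some b => K.Adj a b
    | some a, none => P a
    | none, some b => P b
    | none, none => False
  symm := ⟨by rintro (_|a) (_|b) h <;> simp_all <;> exact K.adj_symm h⟩
  loopless := ⟨by rintro (_|a) h <;> simp_all <;> exact K.irrefl h⟩

@[simp] lemma deco_adj_ss {W : Type*} (K : SimpleGraph W) (P : W → Prop) (a b : W) :
    (deco K P).Adj (some a) (some b) ↔ K.Adj a b := Iff.rfl
@[simp] lemma deco_adj_sn {W : Type*} (K : SimpleGraph W) (P : W → Prop) (a : W) :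
    (deco K P).Adj (some a) none ↔ P a := Iff.rfl
@[simp] lemma deco_adj_ns {W : Type*} (K : SimpleGraph W) (P : W → Prop) (b : W) :
    (deco K P).Adj none (some b) ↔ P b := Iff.rfl
@[simp] lemma deco_adj_nn {W : Type*} (K : SimpleGraph W) (P : W → Prop) :
    ¬ (deco K P).Adj none none := fun h => h

open Finset in
open Classical in
lemma fgraph_deco {W : Type*} [Fintype W] (K : SimpleGraph W) (P : W → Prop) :
    fgraph (deco K P) = fgraph K - fgraph (K.induce {a | ¬ P a}) := by
  classical
  have hsplit := Finset.sum_filter_add_sum_filter_not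
    (Finset.univ.filter (fun s : Finset (Option W) => ∀ u ∈ s, ∀ v ∈ s, ¬ (deco K P).Adj u v))
    (fun s => none ∈ s) (fun s => ((-1 : ℤ)) ^ s.card)
  have h1 : ∑ s ∈ (Finset.univ.filter (fun s : Finset (Option W) => ∀ u ∈ s, ∀ v ∈ s,
        ¬ (deco K P).Adj u v)).filter (fun s => none ∉ s), ((-1:ℤ)) ^ s.card
      = fgraph K := by
    unfold fgraph
    refine Finset.sum_nbij' (fun s => s.eraseNone) (fun t => t.map Function.Embedding.some)
      ?_ ?_ ?_ ?_ ?_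
    · intro s hs
      simp only [mem_filter, mem_univ, true_and] at hs ⊢
      intro u hu v hv
      exact hs.1 _ (Finset.mem_eraseNone.1 hu) _ (Finset.mem_eraseNone.1 hv)
    · intro t ht
      simp only [mem_filter, mem_univ, true_and] at ht ⊢
      refine ⟨?_, by simp⟩
      rintro u hu v hv
      rcases Finset.mem_map.1 hu with ⟨a, ha, rfl⟩
      rcases Finset.mem_map.1 hv with ⟨b, hb, rfl⟩
      exact ht a ha b hb
    · intro s hs
      simp only [mem_filter, mem_univ, true_and] at hs
      ext (_|a) <;> simp [hs.2]
    · intro t ht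
      exact Finset.eraseNone_map_some t
    · intro s hs
      simp only [mem_filter, mem_univ, true_and] at hs
      congr 1
      have : (s.eraseNone.map Function.Embedding.some) = s := by
        ext (_|a) <;> simp [hs.2]
      conv_lhs => rw [← this]
      rw [Finset.card_map]
  have h2 : ∑ s ∈ (Finset.univ.filter (fun s : Finset (Option W) => ∀ u ∈ s, ∀ v ∈ s,
        ¬ (deco K P).Adj u v)).filter (fun s => none ∈ s), ((-1:ℤ)) ^ s.card
      = - fgraph (K.induce {a | ¬ P a}) := by
    unfold fgraph
    have h2' : ∑ s ∈ (Finset.univ.filter (fun s : Finset (Option W) => ∀ u ∈ s, ∀ v ∈ s,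
        ¬ (deco K P).Adj u v)).filter (fun s => none ∈ s), ((-1:ℤ)) ^ s.card
        = ∑ t ∈ Finset.univ.filter (fun t : Finset {a : W // ¬ P a} => ∀ u ∈ t, ∀ v ∈ t,
            ¬ (K.induce {a | ¬ P a}).Adj u v), (-((-1:ℤ)) ^ t.card) := by
      refine Finset.sum_nbij'
        (fun s => (s.eraseNone).subtype (fun a => ¬ P a))
        (fun t => insert none (t.map ⟨fun a => some a.1,
          fun a b h => Subtype.ext (Option.some_injective _ h)⟩)) ?_ ?_ ?_ ?_ ?_
      · intro s hs
        simp only [mem_filter, mem_univ, true_and] at hs ⊢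
        rintro ⟨u, hu⟩ h1u ⟨w, hw⟩ h2w hadj
        simp only [Finset.mem_subtype, Finset.mem_eraseNone] at h1u h2w
        exact hs.1 _ h1u _ h2w hadj
      · intro t ht
        simp only [mem_filter, mem_univ, true_and] at ht ⊢
        refine ⟨?_, Finset.mem_insert_self _ _⟩
        rintro u hu v hv
        rcases Finset.mem_insert.1 hu with rfl | hu
        · rcases Finset.mem_insert.1 hv with rfl | hv
          · exact deco_adj_nn K P
          · rcases Finset.mem_map.1 hv with ⟨b, hb, rfl⟩
            exact b.2
        · rcases Finset.mem_map.1 hu with ⟨a, ha, rfl⟩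
          rcases Finset.mem_insert.1 hv with rfl | hv
          · exact a.2
          · rcases Finset.mem_map.1 hv with ⟨b, hb, rfl⟩
            exact ht a ha b hb
      · intro s hs
        simp only [mem_filter, mem_univ, true_and] at hs
        ext x
        cases x with
        | none => simp [hs.2]
        | some a =>
          simp only [Finset.mem_insert, Finset.mem_map, Finset.mem_subtype,
            Finset.mem_eraseNone, Function.Embedding.coeFn_mk, reduceCtorEq, false_or]
          constructor
          · rintro ⟨⟨b, hb⟩, hmem, heq⟩
            obtain rfl : b = a := Option.some_injective _ heq
            simpa using hmem
          · intro ha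
            exact ⟨⟨a, hs.1 _ ha _ hs.2⟩, by simpa using ha, rfl⟩
      · intro t ht
        ext ⟨a, ha⟩
        simp only [Finset.mem_subtype, Finset.mem_eraseNone, Finset.mem_insert,
          Finset.mem_map, Function.Embedding.coeFn_mk, reduceCtorEq, false_or]
        constructor
        · rintro ⟨⟨b, hb⟩, hmem, heq⟩
          obtain rfl : b = a := Option.some_injective _ heq
          exact hmem
        · intro h
          exact ⟨⟨a, ha⟩, h, rfl⟩
      · intro s hs
        simp only [mem_filter, mem_univ, true_and] at hs
        have h3 : ∀ a ∈ s.eraseNone, ¬ P a := fun a ha =>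
          hs.1 _ (Finset.mem_eraseNone.1 ha) _ hs.2
        have hcard : s.card = ((s.eraseNone).subtype (fun a => ¬ P a)).card + 1 := by
          rw [Finset.card_subtype, Finset.filter_true_of_mem h3]
          have h5 := Finset.card_erase_of_mem hs.2
          have h4 : (s.eraseNone).card = (s.erase none).card := by
            have : (s.erase none).eraseNone = s.eraseNone := by
              ext a; simp [Finset.mem_eraseNone]
            rw [← this]
            have hmap : ((s.erase none).eraseNone.map Function.Embedding.some) = s.erase none := by
              ext (_|a) <;> simp
            conv_rhs => rw [← hmap]
            rw [Finset.card_map]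
          have h6 : 1 ≤ s.card := Finset.card_pos.2 ⟨none, hs.2⟩
          omega
        rw [hcard, pow_succ]
        ring
    rw [h2', Finset.sum_neg_distrib]
    exact congrArg Neg.neg (sum_pow_filter_congr' _ _ _ _ (fun a => Iff.rfl) _ _)
  have hc : fgraph (deco K P) = ∑ s ∈ Finset.univ.filter
      (fun s : Finset (Option W) => ∀ u ∈ s, ∀ v ∈ s, ¬ (deco K P).Adj u v),
      ((-1:ℤ)) ^ s.card := by
    unfold fgraph
    apply Finset.sum_congr _ (fun _ _ => rfl)
    ext a
    simp [Finset.mem_filter]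
  rw [hc, ← hsplit, h1, h2]
  ring

open Classical in
lemma fgraph_deco' {W : Type*} [Fintype W] (K : SimpleGraph W) (P : W → Prop) (M : ℤ)
    (hM : fgraph (K.induce {a | ¬ P a}) = M) : fgraph (deco K P) = fgraph K - M := by
  rw [fgraph_deco, hM]


def sGraph {ι : Type*} {V : ι → Type*} (K : ∀ i, SimpleGraph (V i)) :
    SimpleGraph (Σ i, V i) where
  Adj x y := ∃ h : x.1 = y.1, (K y.1).Adj (h ▸ x.2) y.2
  symm := by
    constructor
    rintro ⟨i, a⟩ ⟨j, b⟩ ⟨h, hadj⟩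
    dsimp only at h
    subst h
    exact ⟨rfl, hadj.symm⟩
  loopless := by
    constructor
    rintro ⟨i, a⟩ ⟨h, hadj⟩
    exact (K i).irrefl hadj

@[simp] lemma sGraph_adj_mk {ι : Type*} {V : ι → Type*} (K : ∀ i, SimpleGraph (V i))
    (i : ι) (a b : V i) : (sGraph K).Adj ⟨i, a⟩ ⟨i, b⟩ ↔ (K i).Adj a b :=
  ⟨fun ⟨_, hadj⟩ => hadj, fun h => ⟨rfl, h⟩⟩

lemma sGraph_adj_ne {ι : Type*} {V : ι → Type*} {K : ∀ i, SimpleGraph (V i)}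
    {x y : Σ i, V i} (h : (sGraph K).Adj x y) : x.1 = y.1 := h.1

open Finset in
open Classical in
lemma fgraph_sigma {ι : Type*} [Fintype ι] {V : ι → Type*} [∀ i, Fintype (V i)]
    (K : ∀ i, SimpleGraph (V i)) : fgraph (sGraph K) = ∏ i, fgraph (K i) := by
  classical
  unfold fgraph
  rw [Finset.prod_univ_sum]
  refine Finset.sum_nbij'
    (fun s => fun i => s.preimage (Sigma.mk i) sigma_mk_injective.injOn)
    (fun p => Finset.univ.sigma (fun i => p i)) ?_ ?_ ?_ ?_ ?_
  · intro s hs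
    simp only [mem_filter, mem_univ, true_and] at hs
    rw [Fintype.mem_piFinset]
    intro i
    simp only [mem_filter, mem_univ, true_and]
    intro a ha b hb hadj
    rw [Finset.mem_preimage] at ha hb
    exact hs _ ha _ hb ((sGraph_adj_mk K i a b).2 hadj)
  · intro p hp
    rw [Fintype.mem_piFinset] at hp
    simp only [mem_filter, mem_univ, true_and]
    rintro ⟨i, a⟩ ha ⟨i', b⟩ hb hadj
    obtain rfl : i = i' := hadj.1
    rw [Finset.mem_sigma] at ha hb
    have := hp i
    simp only [mem_filter, mem_univ, true_and] at this
    exact this a ha.2 b hb.2 ((sGraph_adj_mk K i a b).1 hadj)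
  · intro s hs
    exact Finset.sigma_preimage_mk_of_subset s (Finset.subset_univ _)
  · intro p hp
    funext i
    ext a
    rw [Finset.mem_preimage, Finset.mem_sigma]
    simp
  · intro s hs
    rw [Finset.prod_pow_eq_pow_sum]
    congr 1
    conv_lhs => rw [← Finset.sigma_preimage_mk_of_subset s (Finset.subset_univ _)]
    rw [Finset.card_sigma]


section CB
variable {ι : Type*} {V : ι → Type*} (G : ∀ i, SimpleGraph (V i)) (v : ∀ i, V i)

lemma sigmaAdj_same {i : ι} {a b : V i} : sigmaAdj G ⟨i, a⟩ ⟨i, b⟩ ↔ (G i).Adj a b :=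
  ⟨fun ⟨_, h⟩ => h, fun h => ⟨rfl, h⟩⟩

lemma sigmaAdj_fst {x y : Σ i, V i} (h : sigmaAdj G x y) : x.1 = y.1 := by
  obtain ⟨i, a⟩ := x; obtain ⟨i', b⟩ := y
  obtain ⟨rfl, -⟩ := h; rfl

lemma cB_adj_ll {i i' : ι} {a : V i} {b : V i'} :
    (complBuilding G v).Adj (some (.inl ⟨i, a⟩)) (some (.inl ⟨i', b⟩)) ↔
      sigmaAdj G ⟨i, a⟩ ⟨i', b⟩ ∨ sigmaAdj G ⟨i', b⟩ ⟨i, a⟩ := by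
  rw [complBuilding, SimpleGraph.fromRel_adj]
  constructor
  · rintro ⟨-, h⟩; exact h
  · intro h
    refine ⟨?_, h⟩
    rcases h with h | h
    · rcases h with ⟨rfl, hadj⟩
      simp only [ne_eq, Option.some.injEq, Sum.inl.injEq]
      intro he
      rw [Sigma.mk.inj_iff] at he
      obtain ⟨-, he⟩ := he
      rw [heq_iff_eq] at he
      subst he
      exact (G i').irrefl hadj
    · rcases h with ⟨rfl, hadj⟩
      simp only [ne_eq, Option.some.injEq, Sum.inl.injEq]
      intro he
      rw [Sigma.mk.inj_iff] at he
      obtain ⟨-, he⟩ := he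
      rw [heq_iff_eq] at he
      subst he
      exact (G i).irrefl hadj

lemma cB_adj_ll_same {i : ι} {a b : V i} :
    (complBuilding G v).Adj (some (.inl ⟨i, a⟩)) (some (.inl ⟨i, b⟩)) ↔ (G i).Adj a b := by
  rw [cB_adj_ll, sigmaAdj_same, sigmaAdj_same]
  constructor
  · rintro (h | h); exacts [h, h.symm]
  · exact Or.inl

lemma cB_adj_ll_ne {i i' : ι} {a : V i} {b : V i'} (h : i ≠ i') :
    ¬ (complBuilding G v).Adj (some (.inl ⟨i, a⟩)) (some (.inl ⟨i', b⟩)) := by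
  rw [cB_adj_ll]
  rintro (hs | hs)
  · exact h (sigmaAdj_fst G hs)
  · exact h (sigmaAdj_fst G hs).symm

lemma cB_adj_lr {i i' : ι} {a : V i} :
    (complBuilding G v).Adj (some (.inl ⟨i, a⟩)) (some (.inr i')) ↔ i = i' ∧ a = v i := by
  rw [complBuilding, SimpleGraph.fromRel_adj]
  simp only [ne_eq, Option.some.injEq, reduceCtorEq, not_false_iff, true_and]
  constructor
  · rintro (⟨h1, h2⟩ | h); · exact ⟨h1, h2⟩
    · cases h
  · rintro ⟨h1, h2⟩; exact Or.inl ⟨h1, h2⟩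

lemma cB_adj_rl {i i' : ι} {b : V i'} :
    (complBuilding G v).Adj (some (.inr i)) (some (.inl ⟨i', b⟩)) ↔ i' = i ∧ b = v i' :=
  ⟨fun h => cB_adj_lr G v |>.1 h.symm, fun h => (cB_adj_lr G v |>.2 h).symm⟩

lemma cB_adj_rr {i i' : ι} :
    ¬ (complBuilding G v).Adj (some (.inr i)) (some (.inr i')) := by
  rw [complBuilding, SimpleGraph.fromRel_adj]
  rintro ⟨-, h | h⟩ <;> cases h

lemma cB_adj_rn {i : ι} : (complBuilding G v).Adj (some (.inr i)) none := by
  rw [complBuilding, SimpleGraph.fromRel_adj]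
  exact ⟨by simp, Or.inl trivial⟩

lemma cB_adj_nr {i : ι} : (complBuilding G v).Adj none (some (.inr i)) :=
  (cB_adj_rn G v).symm

lemma cB_adj_ln {x : (Σ i, V i)} :
    ¬ (complBuilding G v).Adj (some (.inl x)) none := by
  rw [complBuilding, SimpleGraph.fromRel_adj]
  rintro ⟨-, h | h⟩ <;> cases h

lemma cB_adj_nl {x : (Σ i, V i)} :
    ¬ (complBuilding G v).Adj none (some (.inl x)) :=
  fun h => cB_adj_ln G v h.symm

lemma cB_adj_nn : ¬ (complBuilding G v).Adj none none := fun h => (complBuilding G v).irrefl h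

end CB


section Part1
open Classical
variable {ι : Type*} {V : ι → Type*} (G : ∀ i, SimpleGraph (V i)) (v : ∀ i, V i) (j : ι)

abbrev S1 (i : ι) : Type _ := {u : V i // (⟨i, u⟩ : Σ i, V i) ≠ ⟨j, v j⟩}

def K1 (i : ι) : SimpleGraph (S1 v j i) := SimpleGraph.comap Subtype.val (G i)

def inner1 (i : ι) : SimpleGraph (Option (S1 v j i)) :=
  deco (K1 G v j i) (fun a => a.1 = v i)

def g1 : Option (Σ i, Option (S1 v j i)) →
    ({x | x ≠ some (Sum.inl ⟨j, v j⟩)} : Set (Option ((Σ i, V i) ⊕ ι)))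
  | none => ⟨none, by simp⟩
  | some ⟨i, none⟩ => ⟨some (Sum.inr i), by simp⟩
  | some ⟨i, some a⟩ => ⟨some (Sum.inl ⟨i, a.1⟩), by simpa using a.2⟩

lemma g1_bij : Function.Bijective (g1 v j) := by
  constructor
  · rintro (_ | ⟨i, _ | a⟩) (_ | ⟨i', _ | b⟩) hxy <;>
      simp only [g1, Subtype.mk.injEq, Option.some.injEq, reduceCtorEq,
        Sum.inr.injEq, Sum.inl.injEq, Sigma.mk.inj_iff] at hxy ⊢
    · subst hxy
      exact ⟨rfl, HEq.rfl⟩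
    · obtain ⟨rfl, h2⟩ := hxy
      refine ⟨rfl, ?_⟩
      rw [heq_iff_eq] at h2 ⊢
      exact congrArg _ (Subtype.ext h2)
  · rintro ⟨(_ | (⟨i, a⟩ | i)), hx⟩
    · exact ⟨none, rfl⟩
    · refine ⟨some ⟨i, some ⟨a, ?_⟩⟩, rfl⟩
      simpa using hx
    · exact ⟨some ⟨i, none⟩, rfl⟩

lemma g1_adj (x y : Option (Σ i, Option (S1 v j i))) :
    (deco (sGraph (inner1 G v j)) (fun y : Σ i, Option (S1 v j i) => y.2 = none)).Adj x y ↔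
    ((complBuilding G v).induce {x | x ≠ some (Sum.inl ⟨j, v j⟩)}).Adj (g1 v j x) (g1 v j y) := by
  have hind : ∀ a b, ((complBuilding G v).induce {x | x ≠ some (Sum.inl ⟨j, v j⟩)}).Adj a b ↔
      (complBuilding G v).Adj a.1 b.1 := fun a b => Iff.rfl
  obtain (_ | ⟨i, (_ | a)⟩) := x <;> obtain (_ | ⟨i', (_ | b)⟩) := y <;>
      rw [hind] <;> simp only [g1]
  · simp [cB_adj_nn G v]
  · simp [cB_adj_nr G v]
  · simp [cB_adj_nl G v]
  · simp [cB_adj_rn G v]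
  · by_cases h : i = i'
    · subst h
      rw [deco_adj_ss, sGraph_adj_mk]
      constructor
      · intro hadj
        exact absurd hadj (deco_adj_nn _ _)
      · intro h
        exact absurd h (cB_adj_rr G v)
    · constructor
      · intro hadj
        exact absurd (sGraph_adj_ne hadj) h
      · intro hadj
        exact absurd hadj (cB_adj_rr G v)
  · by_cases h : i = i'
    · subst h
      rw [deco_adj_ss, sGraph_adj_mk, cB_adj_rl]
      simp [inner1]
    · constructor
      · intro hadj
        exact absurd (sGraph_adj_ne hadj) h
      · rintro hadj
        exact absurd ((cB_adj_rl G v).1 hadj).1.symm h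
  · simp [cB_adj_ln G v]
  · by_cases h : i = i'
    · subst h
      rw [deco_adj_ss, sGraph_adj_mk, cB_adj_lr]
      simp [inner1]
    · constructor
      · intro hadj
        exact absurd (sGraph_adj_ne hadj) h
      · rintro hadj
        exact absurd ((cB_adj_lr G v).1 hadj).1 h
  · by_cases h : i = i'
    · subst h
      rw [deco_adj_ss, sGraph_adj_mk, cB_adj_ll_same]
      exact Iff.rfl
    · constructor
      · intro hadj
        exact absurd (sGraph_adj_ne hadj) h
      · intro hadj
        exact absurd hadj (cB_adj_ll_ne G v h)

end Part1


section Part1calc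
set_option linter.unusedSectionVars false
open Classical Finset
variable {ι : Type*} [Fintype ι] {V : ι → Type*} [∀ i, Fintype (V i)]
  (G : ∀ i, SimpleGraph (V i)) (v : ∀ i, V i) (j : ι)

lemma fgraph_K1_j : fgraph (K1 G v j j) = fdel (G j) {u | u ≠ v j} := by
  have hfd : fdel (G j) {u | u ≠ v j} = fgraph ((G j).induce {u | u ≠ v j}) := by
    unfold fdel
    exact fgraph_inst _ _ _
  rw [hfd]
  refine fgraph_congr (Equiv.subtypeEquivRight ?_) _ _ (fun a b => Iff.rfl)
  intro u
  simp [Sigma.mk.inj_iff]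

lemma fgraph_K1_ne (i : ι) (h : i ≠ j) : fgraph (K1 G v j i) = fgraph (G i) := by
  refine fgraph_congr (Equiv.subtypeUnivEquiv ?_) _ _ (fun a b => Iff.rfl)
  intro u
  simp [Sigma.mk.inj_iff, h]

lemma fgraph_inner1_j : fgraph (inner1 G v j j) = 0 := by
  have hM : ∀ inst : Fintype ↥{a : S1 v j j | ¬ a.1 = v j},
      @fgraph _ inst ((K1 G v j j).induce {a : S1 v j j | ¬ a.1 = v j})
      = fgraph (K1 G v j j) := by
    intro inst
    refine @fgraph_congr _ _ inst _ (Equiv.subtypeUnivEquiv ?_) _ _ (fun a b => Iff.rfl)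
    intro a ha
    exact a.2 (congrArg (Sigma.mk j) ha)
  unfold inner1
  rw [fgraph_deco, hM _]
  ring

lemma part1 (n m : ι → ℤ)
    (hn : ∀ i, fgraph (G i) = n i) (hm : ∀ i, fdel (G i) {u | u ≠ v i} = m i) :
    fdel (complBuilding G v) {x | x ≠ some (Sum.inl ⟨j, v j⟩)} =
      - m j * (∏ i ∈ Finset.univ.erase j, n i) := by
  have h0 : fdel (complBuilding G v) {x | x ≠ some (Sum.inl ⟨j, v j⟩)}
      = fgraph (deco (sGraph (inner1 G v j))
          (fun y : Σ i, Option (S1 v j i) => y.2 = none)) := by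
    have hfd : fdel (complBuilding G v) {x | x ≠ some (Sum.inl ⟨j, v j⟩)} =
        fgraph ((complBuilding G v).induce {x | x ≠ some (Sum.inl ⟨j, v j⟩)}) := by
      unfold fdel
      exact fgraph_inst _ _ _
    rw [hfd]
    exact (fgraph_congr (Equiv.ofBijective _ (g1_bij v j)) _ _ (g1_adj G v j)).symm
  have hzero : ∏ i, fgraph (inner1 G v j i) = 0 :=
    Finset.prod_eq_zero (Finset.mem_univ j) (fgraph_inner1_j G v j)
  have hsnd : ∀ inst : Fintype ↥{y : Σ i, Option (S1 v j i) | ¬ y.2 = none},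
      @fgraph _ inst ((sGraph (inner1 G v j)).induce
      {y : Σ i, Option (S1 v j i) | ¬ y.2 = none}) = ∏ i, fgraph (K1 G v j i) := by
    intro inst
    rw [← fgraph_sigma]
    refine (@fgraph_congr _ _ _ inst (Equiv.ofBijective
      (fun x : Σ i, S1 v j i => (⟨⟨x.1, some x.2⟩, by simp⟩ :
        {y : Σ i, Option (S1 v j i) | ¬ y.2 = none})) ⟨?_, ?_⟩) _ _ ?_).symm
    · rintro ⟨i, a⟩ ⟨i', b⟩ hxy
      simp only [Subtype.mk.injEq, Sigma.mk.inj_iff] at hxy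
      obtain ⟨rfl, h2⟩ := hxy
      rw [heq_iff_eq, Option.some.injEq] at h2
      rw [h2]
    · rintro ⟨⟨i, (_ | a)⟩, hy⟩
      · exact absurd rfl hy
      · exact ⟨⟨i, a⟩, rfl⟩
    · rintro ⟨i, a⟩ ⟨i', b⟩
      by_cases h : i = i'
      · subst h
        rw [sGraph_adj_mk]
        constructor
        · intro hadj
          exact ⟨rfl, hadj⟩
        · rintro ⟨h, hadj⟩
          exact hadj
      · constructor
        · intro hadj
          exact absurd (sGraph_adj_ne hadj) h
        · intro hadj
          exact absurd (sGraph_adj_ne hadj) h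
  have hprod : ∏ i, fgraph (K1 G v j i) = m j * ∏ i ∈ Finset.univ.erase j, n i := by
    rw [← Finset.mul_prod_erase Finset.univ _ (Finset.mem_univ j)]
    rw [fgraph_K1_j, hm j]
    congr 1
    refine Finset.prod_congr rfl ?_
    intro i hi
    rw [fgraph_K1_ne G v j i (Finset.mem_erase.1 hi).1, hn i]
  rw [h0, fgraph_deco, fgraph_sigma, hzero, hsnd _, hprod]
  ring

end Part1calc


section Part2
open Classical
variable {ι : Type*} {V : ι → Type*} (G : ∀ i, SimpleGraph (V i)) (v : ∀ i, V i) (j : ι)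

abbrev Q2 (i : ι) : Type _ := {x : Option (V i) // i = j → x ≠ none}

def L2 (i : ι) : SimpleGraph (Q2 (V := V) j i) :=
  SimpleGraph.comap Subtype.val (deco (G i) (fun a => a = v i))

def g2 : Option (Σ i, Q2 (V := V) j i) →
    ({x | x ≠ some (Sum.inr j)} : Set (Option ((Σ i, V i) ⊕ ι)))
  | none => ⟨none, by simp⟩
  | some ⟨i, ⟨none, h⟩⟩ => ⟨some (Sum.inr i), by
      simp only [Set.mem_setOf_eq, ne_eq, Option.some.injEq, Sum.inr.injEq]
      exact fun hij => h hij rfl⟩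
  | some ⟨i, ⟨some a, _⟩⟩ => ⟨some (Sum.inl ⟨i, a⟩), by simp⟩

lemma g2_bij : Function.Bijective (g2 (V := V) j) := by
  constructor
  · rintro (_ | ⟨i, ⟨(_ | a), ha⟩⟩) (_ | ⟨i', ⟨(_ | b), hb⟩⟩) hxy <;>
      simp only [g2, Subtype.mk.injEq, Option.some.injEq, reduceCtorEq,
        Sum.inr.injEq, Sum.inl.injEq, Sigma.mk.inj_iff] at hxy ⊢
    · subst hxy
      exact ⟨rfl, HEq.rfl⟩
    · obtain ⟨rfl, h2⟩ := hxy
      rw [heq_iff_eq] at h2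
      subst h2
      exact ⟨rfl, HEq.rfl⟩
  · rintro ⟨(_ | (⟨i, a⟩ | i)), hx⟩
    · exact ⟨none, rfl⟩
    · exact ⟨some ⟨i, ⟨some a, fun _ => by simp⟩⟩, rfl⟩
    · refine ⟨some ⟨i, ⟨none, fun hij => ?_⟩⟩, rfl⟩
      exact absurd (by rw [hij]) hx

lemma g2_adj (x y : Option (Σ i, Q2 (V := V) j i)) :
    (deco (sGraph (L2 G v j)) (fun y : Σ i, Q2 (V := V) j i => y.2.1 = none)).Adj x y ↔
    ((complBuilding G v).induce {x | x ≠ some (Sum.inr j)}).Adj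
      (g2 (V := V) j x) (g2 (V := V) j y) := by
  have hind : ∀ a b, ((complBuilding G v).induce {x | x ≠ some (Sum.inr j)}).Adj a b ↔
      (complBuilding G v).Adj a.1 b.1 := fun a b => Iff.rfl
  obtain (_ | ⟨i, ⟨(_ | a), ha⟩⟩) := x <;> obtain (_ | ⟨i', ⟨(_ | b), hb⟩⟩) := y <;>
      rw [hind] <;> simp only [g2]
  · simp [cB_adj_nn G v]
  · simp [cB_adj_nr G v]
  · simp [cB_adj_nl G v]
  · simp [cB_adj_rn G v]
  · by_cases h : i = i'
    · subst h
      rw [deco_adj_ss, sGraph_adj_mk]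
      constructor
      · intro hadj
        exact absurd hadj (deco_adj_nn (G i) (fun a => a = v i))
      · intro hadj
        exact absurd hadj (cB_adj_rr G v)
    · constructor
      · intro hadj
        exact absurd (sGraph_adj_ne hadj) h
      · intro hadj
        exact absurd hadj (cB_adj_rr G v)
  · by_cases h : i = i'
    · subst h
      rw [deco_adj_ss, sGraph_adj_mk, cB_adj_rl]
      simp [L2]
    · constructor
      · intro hadj
        exact absurd (sGraph_adj_ne hadj) h
      · intro hadj
        exact absurd ((cB_adj_rl G v).1 hadj).1.symm h
  · simp [cB_adj_ln G v]
  · by_cases h : i = i'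
    · subst h
      rw [deco_adj_ss, sGraph_adj_mk, cB_adj_lr]
      simp [L2]
    · constructor
      · intro hadj
        exact absurd (sGraph_adj_ne hadj) h
      · intro hadj
        exact absurd ((cB_adj_lr G v).1 hadj).1 h
  · by_cases h : i = i'
    · subst h
      rw [deco_adj_ss, sGraph_adj_mk, cB_adj_ll_same]
      exact Iff.rfl
    · constructor
      · intro hadj
        exact absurd (sGraph_adj_ne hadj) h
      · intro hadj
        exact absurd hadj (cB_adj_ll_ne G v h)

end Part2


section Part2calc
set_option linter.unusedSectionVars false
open Classical Finset
variable {ι : Type*} [Fintype ι] {V : ι → Type*} [∀ i, Fintype (V i)]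
  (G : ∀ i, SimpleGraph (V i)) (v : ∀ i, V i) (j : ι)

lemma fgraph_L2_j : fgraph (L2 G v j j) = fgraph (G j) := by
  refine (fgraph_congr (Equiv.ofBijective
    (fun a : V j => (⟨some a, fun _ => by simp⟩ : Q2 (V := V) j j)) ⟨?_, ?_⟩)
    (G j) (L2 G v j j) ?_).symm
  · intro a b hab
    simp only [Subtype.mk.injEq, Option.some.injEq] at hab
    exact hab
  · rintro ⟨(_ | a), ha⟩
    · exact absurd rfl (ha rfl)
    · exact ⟨a, Subtype.ext rfl⟩
  · intro a b
    exact Iff.rfl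

lemma fgraph_L2_ne (n m : ι → ℤ)
    (hn : ∀ i, fgraph (G i) = n i) (hm : ∀ i, fdel (G i) {u | u ≠ v i} = m i)
    (i : ι) (h : i ≠ j) : fgraph (L2 G v j i) = n i - m i := by
  have h1 : fgraph (L2 G v j i) = fgraph (deco (G i) (fun a => a = v i)) := by
    refine (fgraph_congr (Equiv.ofBijective
      (fun x : Option (V i) => (⟨x, fun hij => absurd hij h⟩ : Q2 (V := V) j i)) ⟨?_, ?_⟩)
      (deco (G i) (fun a => a = v i)) (L2 G v j i) ?_).symm
    · intro a b hab
      simpa using hab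
    · rintro ⟨x, hx⟩
      exact ⟨x, rfl⟩
    · intro a b
      exact Iff.rfl
  have hMM : ∀ inst : Fintype ↥{a : V i | ¬ a = v i},
      @fgraph _ inst ((G i).induce {a : V i | ¬ a = v i}) = fdel (G i) {u | u ≠ v i} := by
    intro inst
    have hfd : fdel (G i) {u | u ≠ v i} = fgraph ((G i).induce {u | u ≠ v i}) := by
      unfold fdel
      exact fgraph_inst _ _ _
    rw [hfd]
  rw [h1, fgraph_deco, hMM _, hn i, hm i]

lemma part2 (n m : ι → ℤ)
    (hn : ∀ i, fgraph (G i) = n i) (hm : ∀ i, fdel (G i) {u | u ≠ v i} = m i) :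
    fdel (complBuilding G v) {x | x ≠ some (Sum.inr j)} =
      n j * (∏ i ∈ Finset.univ.erase j, (n i - m i)) - ∏ i, n i := by
  have h0 : fdel (complBuilding G v) {x | x ≠ some (Sum.inr j)}
      = fgraph (deco (sGraph (L2 G v j))
          (fun y : Σ i, Q2 (V := V) j i => y.2.1 = none)) := by
    have hfd : fdel (complBuilding G v) {x | x ≠ some (Sum.inr j)} =
        fgraph ((complBuilding G v).induce {x | x ≠ some (Sum.inr j)}) := by
      unfold fdel
      exact fgraph_inst _ _ _
    rw [hfd]
    exact (fgraph_congr (Equiv.ofBijective _ (g2_bij j)) _ _ (g2_adj G v j)).symm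
  have hsnd : ∀ inst : Fintype ↥{y : Σ i, Q2 (V := V) j i | ¬ y.2.1 = none},
      @fgraph _ inst ((sGraph (L2 G v j)).induce
      {y : Σ i, Q2 (V := V) j i | ¬ y.2.1 = none}) = ∏ i, fgraph (G i) := by
    intro inst
    rw [← fgraph_sigma]
    refine (@fgraph_congr _ _ _ inst (Equiv.ofBijective
      (fun x : Σ i, V i => (⟨⟨x.1, ⟨some x.2, fun _ => by simp⟩⟩, by simp⟩ :
        {y : Σ i, Q2 (V := V) j i | ¬ y.2.1 = none})) ⟨?_, ?_⟩) _ _ ?_).symm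
    · rintro ⟨i, a⟩ ⟨i', b⟩ hxy
      simp only [Subtype.mk.injEq, Sigma.mk.inj_iff] at hxy
      obtain ⟨rfl, h2⟩ := hxy
      rw [heq_iff_eq, Subtype.mk.injEq, Option.some.injEq] at h2
      rw [h2]
    · rintro ⟨⟨i, ⟨(_ | a), hq⟩⟩, hy⟩
      · exact absurd rfl hy
      · exact ⟨⟨i, a⟩, Subtype.ext (Sigma.ext rfl (heq_of_eq (Subtype.ext rfl)))⟩
    · rintro ⟨i, a⟩ ⟨i', b⟩
      by_cases h : i = i'
      · subst h
        rw [sGraph_adj_mk]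
        constructor
        · intro hadj
          exact ⟨rfl, hadj⟩
        · rintro ⟨h, hadj⟩
          exact hadj
      · constructor
        · intro hadj
          exact absurd (sGraph_adj_ne hadj) h
        · intro hadj
          exact absurd (sGraph_adj_ne hadj) h
  have hprod : ∏ i, fgraph (L2 G v j i)
      = n j * ∏ i ∈ Finset.univ.erase j, (n i - m i) := by
    rw [← Finset.mul_prod_erase Finset.univ _ (Finset.mem_univ j)]
    rw [fgraph_L2_j, hn j]
    congr 1
    refine Finset.prod_congr rfl ?_
    intro i hi
    rw [fgraph_L2_ne G v j n m hn hm i (Finset.mem_erase.1 hi).1]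
  have hpn : ∀ inst, @fgraph _ inst ((sGraph (L2 G v j)).induce
      {y : Σ i, Q2 (V := V) j i | ¬ y.2.1 = none}) = ∏ i, n i := by
    intro inst
    rw [hsnd inst]
    exact Finset.prod_congr rfl (fun i _ => hn i)
  rw [h0, fgraph_deco, fgraph_sigma, hprod, hpn _]

end Part2calc

open Classical in
theorem complBuilding_erase {ι : Type*} [Fintype ι] {V : ι → Type*} [∀ i, Fintype (V i)]
    (G : ∀ i, SimpleGraph (V i)) (v : ∀ i, V i) (n m : ι → ℤ)
    (hn : ∀ i, fgraph (G i) = n i) (hm : ∀ i, fdel (G i) {u | u ≠ v i} = m i) (j : ι) :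
    fdel (complBuilding G v) {x | x ≠ some (Sum.inl ⟨j, v j⟩)} =
      - m j * (∏ i ∈ Finset.univ.erase j, n i) ∧
    fdel (complBuilding G v) {x | x ≠ some (Sum.inr j)} =
      n j * (∏ i ∈ Finset.univ.erase j, (n i - m i)) - ∏ i, n i := by
  exact ⟨part1 G v j n m hn hm, part2 G v j n m hn hm⟩
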